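/- Let {(A_1, G_1), …, (A_l, G_l)} be a faithful comprehensive Gröbner system of an ideal I of P whose branches are pairwise disjoint and cover all parameter assignments (⋃_i A_i = (U → L)), each G_i ⊆ I finite, and suppose each branch is minimal: for every i, every v ∈ A_i, every g ∈ G_i satisfies σ_v(g) ≠ 0, σ_v(G_i) is a Gröbner basis of Ideal.map σ_v I, and for all distinct g, g' ∈ G_i the leading monomial m.degree(σ_v(g)) does not divide m.degree(σ_v(g')). Let G = G_1 ∪ ⋯ ∪ G_l (so G is a CGB of I) and let p ∈ G. Then G \ {p} is a comprehensive Gröbner basis of I if and only if for every branch index i with p ∈ G_i and every v ∈ A_i there exists q ∈ G \ G_i with σ_v(q) ≠ 0 and m.degree(σ_v(q)) = m.degree(σ_v(p)). -/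

import Mathlib

open MvPolynomial

/-- The leading monomial (`m.degree`) of a multivariate polynomial w.r.t. a monomial order. -/
noncomputable def mdeg {σ R : Type*} [CommSemiring R] (m : MonomialOrder σ)
    (p : MvPolynomial σ R) : σ →₀ ℕ :=
  m.toSyn.symm (p.support.sup fun s => m.toSyn s)

/-- `H` is a Gröbner basis of the ideal `J`. -/
def IsGroebnerBasis {σ F : Type*} [Field F] (m : MonomialOrder σ)
    (J : Ideal (MvPolynomial σ F)) (H : Set (MvPolynomial σ F)) : Prop :=
  H ⊆ (J : Set (MvPolynomial σ F)) ∧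
    ∀ p ∈ J, p ≠ 0 → ∃ h ∈ H, h ≠ 0 ∧ mdeg m h ≤ mdeg m p

/-- Specialization of the parameters at `v : U → L`. -/
noncomputable def paramSpec {K L U X : Type*} [CommSemiring K] [CommSemiring L]
    [Algebra K L] (v : U → L) :
    MvPolynomial X (MvPolynomial U K) →+* MvPolynomial X L :=
  MvPolynomial.map ((MvPolynomial.aeval v : MvPolynomial U K →ₐ[K] L) : MvPolynomial U K →+* L)

/-- `G` is a comprehensive Gröbner basis of `I` on the set `A` of parameter assignments. -/
def IsCGBOn {K U X : Type*} (L : Type*) [Field K] [Field L] [Algebra K L]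
    (m : MonomialOrder X) (I : Ideal (MvPolynomial X (MvPolynomial U K)))
    (A : Set (U → L)) (G : Set (MvPolynomial X (MvPolynomial U K))) : Prop :=
  G.Finite ∧ G ⊆ (I : Set (MvPolynomial X (MvPolynomial U K))) ∧
    ∀ v ∈ A, IsGroebnerBasis m (I.map (paramSpec (L := L) v))
      (paramSpec (L := L) v '' G)

/-- `G` is a comprehensive Gröbner basis of `I`. -/
def IsCGB {K U X : Type*} (L : Type*) [Field K] [Field L] [Algebra K L]
    (m : MonomialOrder X) (I : Ideal (MvPolynomial X (MvPolynomial U K)))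
    (G : Set (MvPolynomial X (MvPolynomial U K))) : Prop :=
  G.Finite ∧ G ⊆ (I : Set (MvPolynomial X (MvPolynomial U K))) ∧
    ∀ v : U → L, IsGroebnerBasis m (I.map (paramSpec (L := L) v))
      (paramSpec (L := L) v '' G)

theorem nonessential_iff_covered_in_every_branch
    {K L U X : Type*} [Field K] [Field L] [Algebra K L] [IsAlgClosed L]
    [Fintype U] [Fintype X]
    (m : MonomialOrder X) (I : Ideal (MvPolynomial X (MvPolynomial U K)))
    (l : ℕ) (A : Fin l → Set (U → L))
    (Gb : Fin l → Set (MvPolynomial X (MvPolynomial U K)))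
    (hdisj : ∀ i j, i ≠ j → Disjoint (A i) (A j))
    (hcover : (⋃ i, A i) = Set.univ)
    (hfin : ∀ i, (Gb i).Finite)
    (hfaithful : ∀ i, Gb i ⊆ (I : Set (MvPolynomial X (MvPolynomial U K))))
    (hminimal : ∀ i, ∀ v ∈ A i,
      (∀ g ∈ Gb i, paramSpec (L := L) v g ≠ 0) ∧
      IsGroebnerBasis m (I.map (paramSpec (L := L) v)) (paramSpec (L := L) v '' Gb i) ∧
      (∀ g ∈ Gb i, ∀ g' ∈ Gb i, g ≠ g' →
        ¬ mdeg m (paramSpec (L := L) v g) ≤ mdeg m (paramSpec (L := L) v g')))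
    (G : Set (MvPolynomial X (MvPolynomial U K))) (hG : G = ⋃ i, Gb i)
    (p : MvPolynomial X (MvPolynomial U K)) (hp : p ∈ G) :
    IsCGB L m I (G \ {p}) ↔
      ∀ i, p ∈ Gb i → ∀ v ∈ A i, ∃ q ∈ G \ Gb i,
        paramSpec (L := L) v q ≠ 0 ∧
        mdeg m (paramSpec (L := L) v q) = mdeg m (paramSpec (L := L) v p) := by
  
  subst hG
  constructor
  · rintro ⟨-, -, hGB⟩ i hpi v hv
    obtain ⟨hne0, hGBi, hmin⟩ := hminimal i v hv
    have hpJ : paramSpec (L := L) v p ∈ I.map (paramSpec (L := L) v) :=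
      Ideal.mem_map_of_mem _ (hfaithful i hpi)
    obtain ⟨h, ⟨q, ⟨hqU, hqnp⟩, rfl⟩, hh0, hle⟩ := (hGB v).2 _ hpJ (hne0 p hpi)
    have hqni : q ∉ Gb i := fun hqi => hmin q hqi p hpi (fun h => hqnp h) hle
    refine ⟨q, ⟨hqU, hqni⟩, hh0, ?_⟩
    obtain ⟨j, hj⟩ := Set.mem_iUnion.mp hqU
    have hqJ : paramSpec (L := L) v q ∈ I.map (paramSpec (L := L) v) :=
      Ideal.mem_map_of_mem _ (hfaithful j hj)
    obtain ⟨h', ⟨g, hgGbi, rfl⟩, hg0, hle'⟩ := hGBi.2 _ hqJ hh0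
    by_cases hgp : g = p
    · subst hgp; exact le_antisymm hle hle'
    · exact absurd (hle'.trans hle) (hmin g hgGbi p hpi hgp)
  · intro hcov
    have hsub : (⋃ i, Gb i) ⊆ (I : Set (MvPolynomial X (MvPolynomial U K))) := by
      intro x hx
      obtain ⟨j, hj⟩ := Set.mem_iUnion.mp hx
      exact hfaithful j hj
    refine ⟨(Set.finite_iUnion hfin).diff, fun x hx => hsub hx.1, fun v => ?_⟩
    have hvmem : v ∈ ⋃ i, A i := hcover ▸ Set.mem_univ v
    obtain ⟨i, hv⟩ := Set.mem_iUnion.mp hvmem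
    obtain ⟨hne0, hGBi, hmin⟩ := hminimal i v hv
    constructor
    · rintro x ⟨y, hy, rfl⟩
      exact Ideal.mem_map_of_mem _ (hsub hy.1)
    · intro q' hq' hq'0
      obtain ⟨h, ⟨g, hgi, rfl⟩, hg0, hle⟩ := hGBi.2 q' hq' hq'0
      by_cases hgp : g = p
      · subst hgp
        obtain ⟨q, ⟨hqU, hqni⟩, hq0, heq⟩ := hcov i hgi v hv
        exact ⟨_, ⟨q, ⟨hqU, fun h => hqni (h ▸ hgi)⟩, rfl⟩, hq0, heq ▸ hle⟩
      · exact ⟨_, ⟨g, ⟨Set.mem_iUnion.mpr ⟨i, hgi⟩, hgp⟩, rfl⟩, hg0, hle⟩
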